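/- Let k ≥ 2, let 0 < s < r < 1, let δ > 0, and fix the constant C > 0 from the quadratic estimate for the family Γ(s,r,δ). Let (F_j)_{j ≥ 1} be a sequence of holomorphic automorphisms of ℂ^k fixing the origin with s‖z‖ ≤ ‖F_j(z)‖ ≤ r‖z‖ for all z in the open ball B_δ and all j. Then each derivative A_j = dF_j(0) is invertible, and the maps Φ_j = A(j)⁻¹ ∘ F(j), where F(j) = F_j ∘ ⋯ ∘ F_1 and A(j) = A_j ∘ ⋯ ∘ A_1, satisfy ‖Φ_{j+1}(z) − Φ_j(z)‖ ≤ C δ² (r²/s)^j for all z ∈ B_δ and all j ≥ 0. -/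

import Mathlib

open Metric Set Filter

noncomputable section

/-- A holomorphic automorphism of `ℂ^k`: a holomorphic bijection with holomorphic inverse. -/
def IsAutomorphism {k : ℕ} (F : EuclideanSpace ℂ (Fin k) → EuclideanSpace ℂ (Fin k)) : Prop :=
  Differentiable ℂ F ∧ ∃ G : EuclideanSpace ℂ (Fin k) → EuclideanSpace ℂ (Fin k),
    Differentiable ℂ G ∧ Function.LeftInverse G F ∧ Function.RightInverse G F

/-- `seqComp F j = F j ∘ ⋯ ∘ F 1`, with `seqComp F 0 = id`. -/
def seqComp {α : Type*} (F : ℕ → α → α) : ℕ → α → α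
  | 0 => id
  | n + 1 => F (n + 1) ∘ seqComp F n

/-- `equivComp A j = A j ∘ ⋯ ∘ A 1` as a continuous linear equivalence,
with `equivComp A 0 = id`. -/
def equivComp {E : Type*} [NormedAddCommGroup E] [NormedSpace ℂ E]
    (A : ℕ → E ≃L[ℂ] E) : ℕ → E ≃L[ℂ] E
  | 0 => ContinuousLinearEquiv.refl ℂ E
  | n + 1 => (equivComp A n).trans (A (n + 1))

lemma deriv_bounds {E : Type*} [NormedAddCommGroup E] [NormedSpace ℂ E]
    {F : E → E} {A : E →L[ℂ] E} {s r δ : ℝ} (hδ : 0 < δ)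
    (hd : HasFDerivAt F A 0) (hF0 : F 0 = 0)
    (h : ∀ z ∈ Metric.ball (0 : E) δ, s * ‖z‖ ≤ ‖F z‖ ∧ ‖F z‖ ≤ r * ‖z‖)
    (v : E) : s * ‖v‖ ≤ ‖A v‖ ∧ ‖A v‖ ≤ r * ‖v‖ := by
  have hc : Tendsto (fun n : ℕ => ‖((n : ℂ))‖) atTop atTop := by
    simpa using tendsto_natCast_atTop_atTop (R := ℝ)
  have ht := (hd.lim v hc).norm
  have hev : ∀ᶠ n : ℕ in atTop,
      s * ‖v‖ ≤ ‖(n : ℂ) • (F (0 + ((n : ℂ))⁻¹ • v) - F 0)‖ ∧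
      ‖(n : ℂ) • (F (0 + ((n : ℂ))⁻¹ • v) - F 0)‖ ≤ r * ‖v‖ := by
    filter_upwards [eventually_gt_atTop (Nat.ceil (‖v‖ / δ))] with n hn
    have hn1 : 0 < n := lt_of_le_of_lt (Nat.zero_le _) hn
    have hnR : (0 : ℝ) < n := by exact_mod_cast hn1
    have hnC : ((n : ℂ)) ≠ 0 := by exact_mod_cast hn1.ne'
    set w : E := ((n : ℂ))⁻¹ • v with hw
    have hwn : ‖w‖ = ‖v‖ / n := by
      rw [hw, norm_smul, norm_inv]
      simp [div_eq_inv_mul]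
    have hwball : w ∈ Metric.ball (0 : E) δ := by
      rw [mem_ball_zero_iff, hwn, div_lt_iff₀ hnR]
      have h1 : ‖v‖ / δ < n := lt_of_le_of_lt (Nat.le_ceil _) (by exact_mod_cast hn)
      have h2 : ‖v‖ < n * δ := (div_lt_iff₀ hδ).1 h1
      linarith
    have hb := h w hwball
    have hnorm : ‖(n : ℂ) • (F (0 + ((n : ℂ))⁻¹ • v) - F 0)‖ = n * ‖F w‖ := by
      rw [zero_add, hF0, sub_zero, norm_smul]
      simp [hw]
    constructor
    · rw [hnorm]
      calc s * ‖v‖ = n * (s * ‖w‖) := by rw [hwn]; field_simp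
        _ ≤ n * ‖F w‖ := by exact mul_le_mul_of_nonneg_left hb.1 hnR.le
    · rw [hnorm]
      calc (n : ℝ) * ‖F w‖ ≤ n * (r * ‖w‖) := mul_le_mul_of_nonneg_left hb.2 hnR.le
        _ = r * ‖v‖ := by rw [hwn]; field_simp
  constructor
  · exact ge_of_tendsto ht (hev.mono fun n hn => hn.1)
  · exact le_of_tendsto ht (hev.mono fun n hn => hn.2)

lemma exists_deriv_equiv {k : ℕ} {F : EuclideanSpace ℂ (Fin k) → EuclideanSpace ℂ (Fin k)}
    (hA : IsAutomorphism F) (hF0 : F 0 = 0) :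
    ∃ A : EuclideanSpace ℂ (Fin k) ≃L[ℂ] EuclideanSpace ℂ (Fin k),
      (A : EuclideanSpace ℂ (Fin k) →L[ℂ] EuclideanSpace ℂ (Fin k)) = fderiv ℂ F 0 := by
  obtain ⟨hFd, G, hGd, hGF, hFG⟩ := hA
  have hG0 : G 0 = 0 := by
    have := hGF 0
    rwa [hF0] at this
  have hDF : HasFDerivAt F (fderiv ℂ F 0) 0 := (hFd 0).hasFDerivAt
  have hDG : HasFDerivAt G (fderiv ℂ G 0) 0 := (hGd 0).hasFDerivAt
  have hGF0 : HasFDerivAt G (fderiv ℂ G 0) (F 0) := by rw [hF0]; exact hDG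
  have hFG0 : HasFDerivAt F (fderiv ℂ F 0) (G 0) := by rw [hG0]; exact hDF
  have hcomp1 : HasFDerivAt (G ∘ F) ((fderiv ℂ G 0).comp (fderiv ℂ F 0)) 0 :=
    hGF0.comp 0 hDF
  have hcomp2 : HasFDerivAt (F ∘ G) ((fderiv ℂ F 0).comp (fderiv ℂ G 0)) 0 :=
    hFG0.comp 0 hDG
  have hid1 : (G ∘ F) = id := funext hGF
  have hid2 : (F ∘ G) = id := funext hFG
  rw [hid1] at hcomp1; rw [hid2] at hcomp2
  have h1 : (fderiv ℂ G 0).comp (fderiv ℂ F 0) = ContinuousLinearMap.id ℂ _ :=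
    hcomp1.unique (hasFDerivAt_id 0)
  have h2 : (fderiv ℂ F 0).comp (fderiv ℂ G 0) = ContinuousLinearMap.id ℂ _ :=
    hcomp2.unique (hasFDerivAt_id 0)
  refine ⟨ContinuousLinearEquiv.equivOfInverse (fderiv ℂ F 0) (fderiv ℂ G 0)
    (fun x => ?_) (fun x => ?_), rfl⟩
  · have := congrArg (fun T => T x) h1; simpa using this
  · have := congrArg (fun T => T x) h2; simpa using this


theorem telescoping_estimate_for_normalized_compositions (k : ℕ) (hk : 2 ≤ k)
    (s r δ C : ℝ) (hs : 0 < s) (hsr : s < r) (hr1 : r < 1) (hδ : 0 < δ) (hC : 0 < C)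
    -- `C` is the constant from the quadratic estimate for the family `Γ(s,r,δ)`:
    (hquad : ∀ F : EuclideanSpace ℂ (Fin k) → EuclideanSpace ℂ (Fin k),
      DifferentiableOn ℂ F (Metric.ball 0 δ) →
      Set.InjOn F (Metric.ball 0 δ) →
      F 0 = 0 →
      (∀ z ∈ Metric.ball (0 : EuclideanSpace ℂ (Fin k)) δ,
        s * ‖z‖ ≤ ‖F z‖ ∧ ‖F z‖ ≤ r * ‖z‖) →
      ∀ A : EuclideanSpace ℂ (Fin k) ≃L[ℂ] EuclideanSpace ℂ (Fin k),
        (A : EuclideanSpace ℂ (Fin k) →L[ℂ] EuclideanSpace ℂ (Fin k)) = fderiv ℂ F 0 →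
        ∀ z ∈ Metric.ball (0 : EuclideanSpace ℂ (Fin k)) δ,
          ‖A.symm (F z) - z‖ ≤ C * ‖z‖ ^ 2)
    (F : ℕ → EuclideanSpace ℂ (Fin k) → EuclideanSpace ℂ (Fin k))
    (hF : ∀ j, 1 ≤ j → IsAutomorphism (F j) ∧ F j 0 = 0 ∧
      ∀ z ∈ Metric.ball (0 : EuclideanSpace ℂ (Fin k)) δ,
        s * ‖z‖ ≤ ‖F j z‖ ∧ ‖F j z‖ ≤ r * ‖z‖) :
    ∃ A : ℕ → (EuclideanSpace ℂ (Fin k) ≃L[ℂ] EuclideanSpace ℂ (Fin k)),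
      (∀ j, 1 ≤ j →
        (A j : EuclideanSpace ℂ (Fin k) →L[ℂ] EuclideanSpace ℂ (Fin k))
          = fderiv ℂ (F j) 0) ∧
      ∀ z ∈ Metric.ball (0 : EuclideanSpace ℂ (Fin k)) δ, ∀ j : ℕ,
        ‖(equivComp A (j + 1)).symm (seqComp F (j + 1) z)
            - (equivComp A j).symm (seqComp F j z)‖
          ≤ C * δ ^ 2 * (r ^ 2 / s) ^ j := by
  classical
  have hr0 : 0 < r := hs.trans hsr
  -- choose the derivative equivalences
  have hex : ∀ j : ℕ, 1 ≤ j → ∃ A : EuclideanSpace ℂ (Fin k) ≃L[ℂ] EuclideanSpace ℂ (Fin k),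
      (A : EuclideanSpace ℂ (Fin k) →L[ℂ] EuclideanSpace ℂ (Fin k)) = fderiv ℂ (F j) 0 :=
    fun j hj => exists_deriv_equiv (hF j hj).1 (hF j hj).2.1
  set A : ℕ → (EuclideanSpace ℂ (Fin k) ≃L[ℂ] EuclideanSpace ℂ (Fin k)) :=
    fun j => if h : 1 ≤ j then (hex j h).choose else ContinuousLinearEquiv.refl ℂ _ with hAdef
  have hAco : ∀ j, 1 ≤ j → (A j : EuclideanSpace ℂ (Fin k) →L[ℂ] EuclideanSpace ℂ (Fin k))
      = fderiv ℂ (F j) 0 := by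
    intro j hj
    simp only [hAdef, dif_pos hj]
    exact (hex j hj).choose_spec
  refine ⟨A, hAco, ?_⟩
  -- lower bound for A j
  have hAlow : ∀ j, 1 ≤ j → ∀ v, s * ‖v‖ ≤ ‖A j v‖ := by
    intro j hj v
    obtain ⟨⟨hFd, -⟩, hF0, hbd⟩ := hF j hj
    have hd : HasFDerivAt (F j) (fderiv ℂ (F j) 0) 0 := (hFd 0).hasFDerivAt
    have := (deriv_bounds hδ hd hF0 hbd v).1
    have hco : (A j) v = fderiv ℂ (F j) 0 v := by
      rw [← hAco j hj]; rfl
    rwa [← hco] at this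
  have hsymm : ∀ j, 1 ≤ j → ∀ w, ‖(A j).symm w‖ ≤ s⁻¹ * ‖w‖ := by
    intro j hj w
    have h1 := hAlow j hj ((A j).symm w)
    rw [(A j).apply_symm_apply] at h1
    rw [inv_mul_eq_div, le_div_iff₀ hs]
    nlinarith
  -- bound on the composed inverse
  have hcomp : ∀ j : ℕ, ∀ w, ‖(equivComp A j).symm w‖ ≤ s⁻¹ ^ j * ‖w‖ := by
    intro j
    induction j with
    | zero => intro w; simp [equivComp]
    | succ n ih =>
      intro w
      have hstep : (equivComp A (n + 1)).symm w
          = (equivComp A n).symm ((A (n + 1)).symm w) := by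
        simp [equivComp, ContinuousLinearEquiv.symm_trans_apply]
      rw [hstep]
      calc ‖(equivComp A n).symm ((A (n + 1)).symm w)‖
          ≤ s⁻¹ ^ n * ‖(A (n + 1)).symm w‖ := ih _
        _ ≤ s⁻¹ ^ n * (s⁻¹ * ‖w‖) := by
            apply mul_le_mul_of_nonneg_left (hsymm (n + 1) (by omega) w)
            positivity
        _ = s⁻¹ ^ (n + 1) * ‖w‖ := by ring
  -- bound on the iterated images
  have hseq : ∀ z ∈ Metric.ball (0 : EuclideanSpace ℂ (Fin k)) δ, ∀ j : ℕ,
      ‖seqComp F j z‖ ≤ r ^ j * ‖z‖ ∧ seqComp F j z ∈ Metric.ball (0 : EuclideanSpace ℂ (Fin k)) δ := by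
    intro z hz j
    induction j with
    | zero => exact ⟨by simp [seqComp], by simpa [seqComp] using hz⟩
    | succ n ih =>
      obtain ⟨ihb, ihm⟩ := ih
      have hb := ((hF (n + 1) (by omega)).2.2 _ ihm).2
      have hb2 : ‖seqComp F (n + 1) z‖ ≤ r ^ (n + 1) * ‖z‖ := by
        show ‖F (n + 1) (seqComp F n z)‖ ≤ _
        calc ‖F (n + 1) (seqComp F n z)‖ ≤ r * ‖seqComp F n z‖ := hb
          _ ≤ r * (r ^ n * ‖z‖) := mul_le_mul_of_nonneg_left ihb hr0.le
          _ = r ^ (n + 1) * ‖z‖ := by ring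
      refine ⟨hb2, ?_⟩
      rw [mem_ball_zero_iff]
      have hzδ : ‖z‖ < δ := mem_ball_zero_iff.1 hz
      have hrp : r ^ (n + 1) ≤ 1 := pow_le_one₀ hr0.le hr1.le
      calc ‖seqComp F (n + 1) z‖ ≤ r ^ (n + 1) * ‖z‖ := hb2
        _ ≤ 1 * ‖z‖ := mul_le_mul_of_nonneg_right hrp (norm_nonneg _)
        _ < δ := by simpa using hzδ
  intro z hz j
  obtain ⟨hwb, hwm⟩ := hseq z hz j
  set w := seqComp F j z with hw
  obtain ⟨⟨hFd, G, hGd, hGF, hFG⟩, hF0, hbd⟩ := hF (j + 1) (by omega)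
  have hq := hquad (F (j + 1)) (hFd.differentiableOn) (hGF.injective.injOn)
    hF0 hbd (A (j + 1)) (hAco (j + 1) (by omega)) w hwm
  have hrw : (equivComp A (j + 1)).symm (seqComp F (j + 1) z)
      - (equivComp A j).symm (seqComp F j z)
      = (equivComp A j).symm ((A (j + 1)).symm (F (j + 1) w) - w) := by
    have h1 : seqComp F (j + 1) z = F (j + 1) w := rfl
    have h2 : (equivComp A (j + 1)).symm (seqComp F (j + 1) z)
        = (equivComp A j).symm ((A (j + 1)).symm (F (j + 1) w)) := by
      rw [h1]; simp [equivComp, ContinuousLinearEquiv.symm_trans_apply]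
    rw [h2, ← hw, ← map_sub]
  rw [hrw]
  have hwδ : ‖w‖ ≤ r ^ j * δ := by
    have hzδ : ‖z‖ < δ := mem_ball_zero_iff.1 hz
    calc ‖w‖ ≤ r ^ j * ‖z‖ := hwb
      _ ≤ r ^ j * δ := mul_le_mul_of_nonneg_left hzδ.le (by positivity)
  calc ‖(equivComp A j).symm ((A (j + 1)).symm (F (j + 1) w) - w)‖
      ≤ s⁻¹ ^ j * ‖(A (j + 1)).symm (F (j + 1) w) - w‖ := hcomp j _
    _ ≤ s⁻¹ ^ j * (C * ‖w‖ ^ 2) := by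
        apply mul_le_mul_of_nonneg_left hq; positivity
    _ ≤ s⁻¹ ^ j * (C * (r ^ j * δ) ^ 2) := by
        apply mul_le_mul_of_nonneg_left _ (by positivity)
        apply mul_le_mul_of_nonneg_left _ hC.le
        exact pow_le_pow_left₀ (norm_nonneg _) hwδ 2
    _ = C * δ ^ 2 * (r ^ 2 / s) ^ j := by
        rw [div_pow]
        field_simp
        ring_nf
        rw [← mul_pow, mul_inv_cancel₀ hs.ne', one_pow, one_mul]
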